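/- Let q = 2^t with t ≥ 3, n = q+1, and a = q/2. For each 1 ≤ i ≤ a−1, there exists a unit-memory convolutional code over F_q with parameters (n, 2i, 2; 1, d_f) where the free distance satisfies d_f ≥ n − 2i − 1. -/

import Mathlib

/-- The convolutional code generated by the polynomial matrix `G`. -/
def convCode {F : Type*} [Field F] {k n : ℕ}
    (G : Matrix (Fin k) (Fin n) (Polynomial F)) : Set (Fin n → Polynomial F) :=
  {v | ∃ u : Fin k → Polynomial F, ∀ j, v j = ∑ i : Fin k, u i * G i j}

/-- A polynomial generator matrix is basic if it has a polynomial right inverse. -/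
def isBasic {F : Type*} [Field F] {k n : ℕ}
    (G : Matrix (Fin k) (Fin n) (Polynomial F)) : Prop :=
  ∃ R : Matrix (Fin n) (Fin k) (Polynomial F), G * R = 1

/-- The `i`-th constraint length: the maximal degree in row `i`. -/
def rowDegree {F : Type*} [Field F] {k n : ℕ}
    (G : Matrix (Fin k) (Fin n) (Polynomial F)) (i : Fin k) : ℕ :=
  Finset.univ.sup fun j => (G i j).natDegree

/-- The degree (overall constraint length) `γ = ∑ γ_i` of a generator matrix. -/
def convDegree {F : Type*} [Field F] {k n : ℕ}
    (G : Matrix (Fin k) (Fin n) (Polynomial F)) : ℕ :=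
  ∑ i : Fin k, rowDegree G i

/-- The memory `m = max γ_i` of a generator matrix. -/
def convMemory {F : Type*} [Field F] {k n : ℕ}
    (G : Matrix (Fin k) (Fin n) (Polynomial F)) : ℕ :=
  Finset.univ.sup fun i => rowDegree G i

/-- A basic generator matrix is reduced if its overall constraint length is minimal
among all basic generator matrices of the same code. -/
def isReduced {F : Type*} [Field F] {k n : ℕ}
    (G : Matrix (Fin k) (Fin n) (Polynomial F)) : Prop :=
  isBasic G ∧ ∀ G' : Matrix (Fin k) (Fin n) (Polynomial F),
    isBasic G' → convCode G' = convCode G → convDegree G ≤ convDegree G'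

/-- The weight of `v(D) ∈ F[D]^n`: the total number of nonzero coefficients. -/
def polyWeight {F : Type*} [Field F] [DecidableEq F] {n : ℕ}
    (v : Fin n → Polynomial F) : ℕ :=
  ∑ j : Fin n, (v j).support.card

open Polynomial Finset

lemma keyA {F : Type*} [Field F] [DecidableEq F] {q K : ℕ} (hK : 2 ≤ K)
    {x : Fin q → F} (hx : Function.Injective x) (c : Fin K → F)
    (w : Fin (q + 1) → F)
    (hwf : ∀ (j : Fin (q + 1)) (h : (j : ℕ) < q), w j = ∑ l : Fin K, c l * x ⟨j, h⟩ ^ (l : ℕ))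
    (hwi : ∀ j : Fin (q + 1), ¬((j : ℕ) < q) → w j = c ⟨K - 1, by omega⟩)
    (hw : ∃ j, w j ≠ 0) :
    q + 2 - K ≤ (Finset.univ.filter fun j => w j ≠ 0).card := by
  set p : F[X] := ∑ l : Fin K, C (c l) * X ^ (l : ℕ) with hp
  have heval : ∀ y : F, p.eval y = ∑ l : Fin K, c l * y ^ (l : ℕ) := by
    intro y; simp [hp, eval_finset_sum]
  have hcoeff : p.coeff (K - 1) = c ⟨K - 1, by omega⟩ := by
    rw [hp, finset_sum_coeff]
    rw [Finset.sum_eq_single (⟨K - 1, by omega⟩ : Fin K)]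
    · simp [coeff_C_mul, coeff_X_pow]
    · intro b _ hb
      rw [coeff_C_mul, coeff_X_pow, if_neg, mul_zero]
      intro h; exact hb (Fin.ext (by simpa using h.symm))
    · simp
  have hdeg : p.natDegree ≤ K - 1 := by
    apply Polynomial.natDegree_sum_le_of_forall_le
    intro l _
    exact (natDegree_C_mul_X_pow_le _ _).trans (by omega)
  have hp0 : p ≠ 0 := by
    obtain ⟨j0, hj0⟩ := hw
    by_cases hfin : (j0 : ℕ) < q
    · intro h; exact hj0 (by rw [hwf j0 hfin, ← heval, h, eval_zero])
    · intro h; exact hj0 (by rw [hwi j0 hfin, ← hcoeff, h, coeff_zero])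
  have hZfin : (Finset.univ.filter fun j : Fin (q + 1) => (j : ℕ) < q ∧ w j = 0).card
      ≤ p.natDegree := by
    refine le_trans (Finset.card_le_card_of_injOn (t := p.roots.toFinset)
      (fun j => if h : (j : ℕ) < q then x ⟨j, h⟩ else 0) ?_ ?_) ?_
    · intro j hj
      simp only [mem_coe, mem_filter, mem_univ, true_and] at hj
      obtain ⟨hjq, hw0⟩ := hj
      have : p.eval (x ⟨j, hjq⟩) = 0 := by rw [heval, ← hwf j hjq, hw0]
      simp only [mem_coe, hjq, dif_pos, Multiset.mem_toFinset]
      rw [mem_roots hp0]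
      exact this
    · intro j1 h1 j2 h2 hEq
      simp only [coe_filter, Set.mem_setOf_eq, mem_univ, true_and] at h1 h2
      simp only [h1.1, h2.1, dif_pos] at hEq
      have := hx hEq
      exact Fin.ext (by simpa [Fin.ext_iff] using this)
    · exact (Multiset.toFinset_card_le _).trans (card_roots' p)
  have hsplit : (Finset.univ.filter fun j => w j = 0).card
      + (Finset.univ.filter fun j : Fin (q+1) => ¬ (w j = 0)).card = q + 1 := by
    rw [Finset.card_filter_add_card_filter_not]
    simp
  have hZle : (Finset.univ.filter fun j => w j = 0).card ≤ K - 1 := by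
    by_cases htop : c ⟨K - 1, by omega⟩ = 0
    · have hdeg2 : p.natDegree ≤ K - 2 := by
        by_contra hcon
        push_neg at hcon
        have h1 : p.natDegree = K - 1 := by omega
        have h2 := Polynomial.leadingCoeff_ne_zero.mpr hp0
        rw [Polynomial.leadingCoeff, h1, hcoeff] at h2
        exact h2 htop
      have hsub : (Finset.univ.filter fun j => w j = 0)
          ⊆ (Finset.univ.filter fun j : Fin (q + 1) => (j : ℕ) < q ∧ w j = 0)
            ∪ {Fin.last q} := by
        intro j hj
        simp only [mem_filter, mem_univ, true_and] at hj
        simp only [mem_union, mem_filter, mem_univ, true_and, mem_singleton]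
        by_cases h : (j : ℕ) < q
        · exact Or.inl ⟨h, hj⟩
        · exact Or.inr (Fin.ext (by simp [Fin.last]; omega))
      have h1 := Finset.card_le_card hsub
      have h2 := Finset.card_union_le
        (Finset.univ.filter fun j : Fin (q + 1) => (j : ℕ) < q ∧ w j = 0)
        ({Fin.last q} : Finset (Fin (q+1)))
      have h3 : ({Fin.last q} : Finset (Fin (q+1))).card = 1 := Finset.card_singleton _
      omega
    · have hsub : (Finset.univ.filter fun j => w j = 0)
          ⊆ (Finset.univ.filter fun j : Fin (q + 1) => (j : ℕ) < q ∧ w j = 0) := by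
        intro j hj
        simp only [mem_filter, mem_univ, true_and] at hj ⊢
        refine ⟨?_, hj⟩
        by_contra h
        rw [hwi j h] at hj
        exact htop hj
      have h1 := Finset.card_le_card hsub
      omega
  have : (Finset.univ.filter fun j : Fin (q+1) => ¬ (w j = 0)).card
      = (Finset.univ.filter fun j => w j ≠ 0).card := rfl
  omega

lemma natDegree_det_submatrix_le {F : Type*} [Field F] {k n : ℕ}
    (G : Matrix (Fin k) (Fin n) (Polynomial F)) (f : Fin k → Fin n) :
    ((G.submatrix id f).det).natDegree ≤ convDegree G := by
  rw [Matrix.det_apply']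
  apply Polynomial.natDegree_sum_le_of_forall_le
  intro σ _
  refine (Polynomial.natDegree_mul_le).trans ?_
  rw [Polynomial.natDegree_intCast]
  simp only [zero_add]
  refine (Polynomial.natDegree_prod_le _ _).trans ?_
  have h1 : ∀ l : Fin k, ((G.submatrix id f) (σ l) l).natDegree ≤ rowDegree G (σ l) := by
    intro l
    exact Finset.le_sup (f := fun j => ((G (σ l)) j).natDegree) (Finset.mem_univ (f l))
  refine (Finset.sum_le_sum fun l _ => h1 l).trans ?_
  rw [show (∑ l : Fin k, rowDegree G (σ l)) = ∑ l : Fin k, rowDegree G l from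
    Equiv.sum_comp σ _]
  exact le_of_eq rfl

theorem convolutional_even_dual (t q n a : ℕ) (ht : 3 ≤ t) (hq : q = 2 ^ t)
    (hn : n = q + 1) (ha : a = q / 2) (i : ℕ) (hi1 : 1 ≤ i) (hi2 : i ≤ a - 1)
    (F : Type*) [Field F] [Fintype F] [DecidableEq F] (hF : Fintype.card F = q) :
    ∃ G : Matrix (Fin (2 * i)) (Fin n) (Polynomial F),
      isReduced G ∧
      convDegree G = 2 ∧
      convMemory G = 1 ∧
      (∀ v ∈ convCode G, v ≠ 0 → n - 2 * i - 1 ≤ polyWeight v) := by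
  subst hn
  have hqeven : 2 ∣ q := by subst hq; exact dvd_pow_self 2 (by omega)
  have hq8 : 8 ≤ q := by
    subst hq
    calc (8:ℕ) = 2 ^ 3 := by norm_num
    _ ≤ 2 ^ t := Nat.pow_le_pow_right (by norm_num) ht
  have hik : 2 * i + 2 ≤ q := by omega
  set k := 2 * i with hk
  have hk2 : 2 ≤ k := by omega
  set K := k + 2 with hKdef
  have hKq : K ≤ q := by omega
  have x : Fin q ≃ F := (Fintype.equivFinOfCardEq hF).symm
  have hxinj : Function.Injective (x : Fin q → F) := x.injective
  set Mmat : Matrix (Fin K) (Fin (q+1)) F := Matrix.of fun l j =>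
    if h : (j : ℕ) < q then x ⟨j, h⟩ ^ (l : ℕ) else if (l : ℕ) = K - 1 then 1 else 0 with hM
  set e : Fin K → Fin (q+1) := fun l => ⟨(l : ℕ), by have := l.isLt; omega⟩ with he
  set Q : Matrix (Fin K) (Fin K) F := Matrix.of fun m b => Mmat m (e b) with hQ
  have hQval : ∀ m b : Fin K, Q m b = x ⟨(b : ℕ), by have := b.isLt; omega⟩ ^ (m : ℕ) := by
    intro m b
    rw [hQ]
    simp only [Matrix.of_apply, hM, he]
    rw [dif_pos (show ((⟨(b:ℕ), by have := b.isLt; omega⟩ : Fin (q+1)) : ℕ) < q from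
      lt_of_lt_of_le b.isLt hKq)]
  have hdetQ : IsUnit Q.det := by
    have hQv : Q = (Matrix.vandermonde fun l : Fin K =>
        x ⟨(l : ℕ), by have := l.isLt; omega⟩).transpose := by
      ext m b
      rw [hQval, Matrix.transpose_apply]
      rfl
    rw [hQv, Matrix.det_transpose, Matrix.det_vandermonde]
    rw [isUnit_iff_ne_zero]
    apply Finset.prod_ne_zero_iff.mpr
    intro i1 _
    apply Finset.prod_ne_zero_iff.mpr
    intro j1 hj1
    apply sub_ne_zero_of_ne
    intro hxx
    have h1 := hxinj hxx
    have h2 : (j1 : ℕ) = (i1 : ℕ) := by simpa [Fin.ext_iff] using h1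
    simp only [Finset.mem_Ioi] at hj1
    have : (i1 : ℕ) < (j1 : ℕ) := hj1
    omega
  set s : Matrix (Fin K) (Fin (q+1)) F := Q⁻¹ * Mmat with hs
  have hse : ∀ a2 b : Fin K, s a2 (e b) = if a2 = b then (1:F) else 0 := by
    intro a2 b
    have h1 : s a2 (e b) = (Q⁻¹ * Q) a2 b := by
      rw [hs, hQ]
      simp [Matrix.mul_apply]
    rw [h1, Matrix.nonsing_inv_mul Q hdetQ, Matrix.one_apply]
  set L : Matrix (Fin k) (Fin K) (Polynomial F) := Matrix.of fun l m =>
    if (m : ℕ) = (l : ℕ) then 1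
    else if (l : ℕ) < 2 ∧ (m : ℕ) = k + (l : ℕ) then Polynomial.X else 0 with hL
  set G : Matrix (Fin k) (Fin (q+1)) (Polynomial F) := Matrix.of fun l j =>
    ∑ m : Fin K, L l m * Polynomial.C (s m j) with hG
  have hLval : ∀ (l : Fin k) (b : Fin K), L l b =
      if (b : ℕ) = (l : ℕ) then 1
      else if (l : ℕ) < 2 ∧ (b : ℕ) = k + (l : ℕ) then Polynomial.X else 0 := by
    intro l b; rw [hL]; rfl
  have hGe : ∀ (l : Fin k) (b : Fin K), G l (e b) = L l b := by
    intro l b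
    rw [hG]
    simp only [Matrix.of_apply, hse]
    simp only [apply_ite Polynomial.C, Polynomial.C_1, Polynomial.C_0, mul_ite, mul_one,
      mul_zero, Finset.sum_ite_eq', Finset.mem_univ, if_true]
  set f : Fin k → Fin (q+1) := fun l' =>
    if (l' : ℕ) = 0 then e ⟨k, by omega⟩
    else if (l' : ℕ) = 1 then e ⟨k + 1, by omega⟩
    else e ⟨(l' : ℕ), by have := l'.isLt; omega⟩ with hf
  have hGf : ∀ l l' : Fin k, G l (f l') =
      if l = l' then (if (l : ℕ) < 2 then (Polynomial.X : Polynomial F) else 1) else 0 := by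
    intro l l'
    have hl := l.isLt
    have hl' := l'.isLt
    simp only [hf]
    by_cases h0 : (l' : ℕ) = 0
    · rw [if_pos h0, hGe, hLval]
      simp only [Fin.ext_iff, h0]
      split_ifs <;> first | rfl | omega
    · by_cases h1 : (l' : ℕ) = 1
      · rw [if_neg h0, if_pos h1, hGe, hLval]
        simp only [Fin.ext_iff, h1]
        split_ifs <;> first | rfl | omega
      · rw [if_neg h0, if_neg h1, hGe, hLval]
        simp only [Fin.ext_iff]
        split_ifs <;> first | rfl | omega
  set R : Matrix (Fin (q+1)) (Fin k) (Polynomial F) := Matrix.of fun j l' =>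
    if j = e ⟨(l' : ℕ), by have := l'.isLt; omega⟩ then 1 else 0 with hR
  have hGR : G * R = 1 := by
    refine Matrix.ext fun l l' => ?_
    rw [Matrix.mul_apply]
    simp only [hR, Matrix.of_apply, mul_ite, mul_one, mul_zero]
    rw [Finset.sum_ite_eq' Finset.univ (e ⟨(l' : ℕ), by have := l'.isLt; omega⟩)
      (fun j => G l j)]
    simp only [Finset.mem_univ, if_true]
    rw [hGe, hLval, Matrix.one_apply]
    have hl := l.isLt
    have hl' := l'.isLt
    simp only [Fin.ext_iff]
    split_ifs <;> first | rfl | omega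
  have hrowle : ∀ (l : Fin k) (j : Fin (q+1)),
      (G l j).natDegree ≤ if (l : ℕ) < 2 then 1 else 0 := by
    intro l j
    rw [hG]
    simp only [Matrix.of_apply]
    apply Polynomial.natDegree_sum_le_of_forall_le
    intro m _
    refine (Polynomial.natDegree_mul_le).trans ?_
    rw [Polynomial.natDegree_C, add_zero]
    rw [hLval]
    split_ifs <;>
      simp only [Polynomial.natDegree_one, Polynomial.natDegree_X, Polynomial.natDegree_zero] <;>
      omega
  have hrow : ∀ l : Fin k, rowDegree G l = if (l : ℕ) < 2 then 1 else 0 := by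
    intro l
    apply le_antisymm
    · exact Finset.sup_le fun j _ => hrowle l j
    · by_cases h2 : (l : ℕ) < 2
      · simp only [h2, if_true]
        have hX : G l (e ⟨k + (l : ℕ), by omega⟩) = Polynomial.X := by
          rw [hGe, hLval]
          rw [if_neg (by simp; omega), if_pos (by simp; omega)]
        have : (G l (e ⟨k + (l : ℕ), by omega⟩)).natDegree = 1 := by
          rw [hX, Polynomial.natDegree_X]
        calc 1 = _ := this.symm
          _ ≤ rowDegree G l :=
            Finset.le_sup (f := fun j => (G l j).natDegree) (Finset.mem_univ _)
      · simp [h2]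
  have hfilter2 : (Finset.univ.filter fun l : Fin k => (l : ℕ) < 2)
      = {(⟨0, by omega⟩ : Fin k), ⟨1, by omega⟩} := by
    ext l
    simp [Fin.ext_iff]
    omega
  have hcard2 : (Finset.univ.filter fun l : Fin k => (l : ℕ) < 2).card = 2 := by
    rw [hfilter2]
    rw [Finset.card_insert_of_notMem (by simp [Fin.ext_iff]), Finset.card_singleton]
  have hdegG : convDegree G = 2 := by
    unfold convDegree
    rw [Finset.sum_congr rfl fun l _ => hrow l]
    rw [Finset.sum_ite, Finset.sum_const, Finset.sum_const_zero, add_zero, smul_eq_mul,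
      mul_one, hcard2]
  have hdet2 : (G.submatrix id f).det = Polynomial.X ^ 2 := by
    have hdiag : G.submatrix id f = Matrix.diagonal
        (fun l : Fin k => if (l : ℕ) < 2 then (Polynomial.X : Polynomial F) else 1) := by
      refine Matrix.ext fun l l' => ?_
      rw [Matrix.submatrix_apply]
      show G l (f l') = _
      rw [hGf]
      by_cases h : l = l'
      · subst h; simp
      · rw [if_neg h, Matrix.diagonal_apply_ne _ h]
    rw [hdiag, Matrix.det_diagonal]
    rw [Finset.prod_ite, Finset.prod_const, Finset.prod_const_one, mul_one, hcard2]
  refine ⟨G, ⟨⟨R, hGR⟩, ?_⟩, hdegG, ?_, ?_⟩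
  · -- reduced
    intro G' hG'basic hcodeEq
    have hmem1 : ∀ l0 : Fin k, ∃ uu : Fin k → Polynomial F,
        ∀ j, G' l0 j = ∑ i2 : Fin k, uu i2 * G i2 j := by
      intro l0
      have hmm : (fun j => G' l0 j) ∈ convCode G' := by
        refine ⟨fun i2 => if i2 = l0 then 1 else 0, fun j => ?_⟩
        simp [ite_mul, Finset.sum_ite_eq']
      rw [hcodeEq] at hmm
      obtain ⟨uu, huu⟩ := hmm
      exact ⟨uu, fun j => huu j⟩
    have hmem2 : ∀ l0 : Fin k, ∃ uu : Fin k → Polynomial F,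
        ∀ j, G l0 j = ∑ i2 : Fin k, uu i2 * G' i2 j := by
      intro l0
      have hmm : (fun j => G l0 j) ∈ convCode G := by
        refine ⟨fun i2 => if i2 = l0 then 1 else 0, fun j => ?_⟩
        simp [ite_mul, Finset.sum_ite_eq']
      rw [← hcodeEq] at hmm
      obtain ⟨uu, huu⟩ := hmm
      exact ⟨uu, fun j => huu j⟩
    choose U hU using hmem1
    choose V hV using hmem2
    have hU' : G' = Matrix.of U * G := by
      refine Matrix.ext fun l j => ?_
      rw [Matrix.mul_apply]
      exact hU l j
    have hV' : G = Matrix.of V * G' := by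
      refine Matrix.ext fun l j => ?_
      rw [Matrix.mul_apply]
      exact hV l j
    have hVU : Matrix.of V * Matrix.of U = 1 := by
      have h1 : (Matrix.of V * Matrix.of U) * G = G := by
        rw [Matrix.mul_assoc, ← hU', ← hV']
      calc Matrix.of V * Matrix.of U
          = (Matrix.of V * Matrix.of U) * 1 := by rw [Matrix.mul_one]
        _ = (Matrix.of V * Matrix.of U) * (G * R) := by rw [hGR]
        _ = ((Matrix.of V * Matrix.of U) * G) * R := by rw [← Matrix.mul_assoc]
        _ = G * R := by rw [h1]
        _ = 1 := hGR
    have hdetU : (Matrix.of U).det ≠ 0 := by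
      intro h0
      have hdd := congrArg Matrix.det hVU
      rw [Matrix.det_mul, h0, mul_zero, Matrix.det_one] at hdd
      exact one_ne_zero hdd.symm
    have hsub : G'.submatrix id f = Matrix.of U * (G.submatrix id f) := by
      refine Matrix.ext fun l l' => ?_
      rw [hU']
      simp [Matrix.mul_apply, Matrix.submatrix_apply]
    have h2le : 2 ≤ ((G'.submatrix id f).det).natDegree := by
      rw [hsub, Matrix.det_mul, hdet2]
      rw [Polynomial.natDegree_mul hdetU (pow_ne_zero 2 Polynomial.X_ne_zero)]
      rw [Polynomial.natDegree_X_pow]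
      omega
    have h3 := natDegree_det_submatrix_le G' f
    rw [hdegG]
    omega
  · -- memory
    unfold convMemory
    apply le_antisymm
    · apply Finset.sup_le
      intro l _
      rw [hrow]
      split_ifs <;> omega
    · have h0 : rowDegree G ⟨0, by omega⟩ = 1 := by rw [hrow]; simp
      calc 1 = _ := h0.symm
        _ ≤ _ := Finset.le_sup (f := fun l => rowDegree G l) (Finset.mem_univ _)
  · -- distance
    intro v hv hvne
    obtain ⟨u, hu⟩ := hv
    have hvj : ∃ j0, v j0 ≠ 0 := by
      by_contra h; push_neg at h; exact hvne (funext h)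
    obtain ⟨j0, hj0⟩ := hvj
    obtain ⟨d, hd⟩ : ∃ d, (v j0).coeff d ≠ 0 := by
      by_contra h; push_neg at h
      exact hj0 (Polynomial.ext (by simpa using h))
    set c : Fin K → F := fun m => (∑ l : Fin k, u l * L l m).coeff d with hc
    set c' : Fin K → F := Matrix.vecMul c Q⁻¹ with hc'
    have hwq : ∀ j, (v j).coeff d = Matrix.vecMul c' Mmat j := by
      intro j
      have h1 : v j = ∑ m : Fin K, (∑ l : Fin k, u l * L l m) * Polynomial.C (s m j) := by
        rw [hu j, hG]
        simp only [Matrix.of_apply, Finset.mul_sum, Finset.sum_mul]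
        rw [Finset.sum_comm]
        refine Finset.sum_congr rfl fun m _ => Finset.sum_congr rfl fun l _ => ?_
        ring
      rw [h1, Polynomial.finset_sum_coeff]
      simp only [Polynomial.coeff_mul_C]
      have h2 : Matrix.vecMul c' Mmat = Matrix.vecMul c s := by
        rw [hc', Matrix.vecMul_vecMul, ← hs]
      rw [h2]
      simp [Matrix.vecMul, dotProduct, hc]
    have hkey := keyA (q := q) (K := K) (by omega) hxinj c'
      (fun j => Matrix.vecMul c' Mmat j) ?_ ?_ ?_
    rotate_left
    · intro j hj
      simp [Matrix.vecMul, dotProduct, hM, hj]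
    · intro j hj
      simp only [Matrix.vecMul, dotProduct, hM, Matrix.of_apply, dif_neg hj,
        mul_ite, mul_one, mul_zero]
      have hcond : ∀ l : Fin K, ((l : ℕ) = K - 1) = (l = ⟨K - 1, by omega⟩) := by
        intro l
        apply propext
        constructor
        · intro h; exact Fin.ext (by simpa using h)
        · intro h; subst h; rfl
      simp only [hcond]
      rw [Finset.sum_ite_eq' Finset.univ (⟨K - 1, by omega⟩ : Fin K) (fun l => c' l)]
      simp
    · exact ⟨j0, by
        show Matrix.vecMul c' Mmat j0 ≠ 0
        rw [← hwq j0]; exact hd⟩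
    have heqfilter : (Finset.univ.filter fun j : Fin (q+1) =>
        Matrix.vecMul c' Mmat j ≠ 0)
        = (Finset.univ.filter fun j => (v j).coeff d ≠ 0) := by
      apply Finset.filter_congr
      intro j _
      rw [hwq j]
    have hcard : (Finset.univ.filter fun j => (v j).coeff d ≠ 0).card ≤ polyWeight v := by
      rw [Finset.card_filter]
      unfold polyWeight
      apply Finset.sum_le_sum
      intro j _
      split_ifs with h
      · exact Finset.card_pos.mpr ⟨d, Polynomial.mem_support_iff.mpr h⟩
      · exact Nat.zero_le _
    rw [heqfilter] at hkey
    omega
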